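/- Let (P_n)_{n≥0} be a monic OPS with recurrence coefficients (B_n), (C_n), let c ∈ ℂ, and suppose there exist complex sequences (a_n)_{n≥0}, (b_n)_{n≥0}, (c_n)_{n≥0} with c_0 = 0 such that (X − c)·S_q P_n = (a_n·X + b_n)·P_n + c_n·P_{n−1} for all n ≥ 0 (the case a = 1 of the structure relation). Then for all n ≥ 0: a_n = α_n and b_n = −α_n·c + (α_n − α_{n−1})·(B_0 + B_1 + ⋯ + B_{n−1}), where the sum is empty for n = 0. -/
import Mathlib


noncomputable section

/-- Real power `q ^ r` (with `q > 0` in applications), coerced into `ℂ`. -/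
def rp (q : ℝ) (r : ℝ) : ℂ := ((q ^ r : ℝ) : ℂ)

/-- The lattice point `x(z) = (z + z⁻¹)/2`. -/
def xl (z : ℂ) : ℂ := (z + z⁻¹) / 2

/-- `x₊(z) = (q^{1/2} z + q^{-1/2} z⁻¹)/2`. -/
def xp (q : ℝ) (z : ℂ) : ℂ := (rp q (1/2) * z + rp q (-(1/2)) * z⁻¹) / 2

/-- `x₋(z) = (q^{-1/2} z + q^{1/2} z⁻¹)/2`. -/
def xm (q : ℝ) (z : ℂ) : ℂ := (rp q (-(1/2)) * z + rp q (1/2) * z⁻¹) / 2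

/-- `IsSq q f g` means `g = S_q f`, i.e. `g` satisfies the defining property of the
averaging operator applied to `f`. -/
def IsSq (q : ℝ) (f g : Polynomial ℂ) : Prop :=
  ∀ z : ℂ, z ≠ 0 → Polynomial.eval (xl z) g =
    (Polynomial.eval (xp q z) f + Polynomial.eval (xm q z) f) / 2

/-- `IsDq q f g` means `g = D_q f`, i.e. `g` satisfies the defining property of the
Askey-Wilson operator applied to `f`. -/
def IsDq (q : ℝ) (f g : Polynomial ℂ) : Prop :=
  ∀ z : ℂ, z ≠ 0 → Polynomial.eval (xl z) g * (xp q z - xm q z) =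
    Polynomial.eval (xp q z) f - Polynomial.eval (xm q z) f

/-- `α = (q^{1/2} + q^{-1/2})/2`. -/
def alphaC (q : ℝ) : ℂ := (rp q (1/2) + rp q (-(1/2))) / 2

/-- `α_n = (q^{n/2} + q^{-n/2})/2`. -/
def alphaN (q : ℝ) (n : ℕ) : ℂ := (rp q ((n : ℝ)/2) + rp q (-((n : ℝ)/2))) / 2

/-- `γ_n = (q^{n/2} - q^{-n/2})/(q^{1/2} - q^{-1/2})`. -/
def gammaN (q : ℝ) (n : ℕ) : ℂ :=
  (rp q ((n : ℝ)/2) - rp q (-((n : ℝ)/2))) / (rp q (1/2) - rp q (-(1/2)))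

/-- The monic Chebyshev polynomials of the first kind. -/
def chebM (n : ℕ) : Polynomial ℂ :=
  if n = 0 then 1 else (2 : ℂ) ^ (1 - (n : ℤ)) • Polynomial.Chebyshev.T ℂ (n : ℤ)

end



open Polynomial

lemma T_eval_lattice (z : ℂ) (hz : z ≠ 0) (n : ℕ) :
    Polynomial.eval ((z + z⁻¹)/2) (Polynomial.Chebyshev.T ℂ (n : ℤ)) =
      (z ^ n + z⁻¹ ^ n) / 2 := by
  induction n using Nat.twoStepInduction with
  | zero => simp [Polynomial.Chebyshev.T_zero]
  | one => simp [Polynomial.Chebyshev.T_one]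
  | more n ih1 ih2 =>
    have h : ((n : ℤ) + 2) = ((n + 2 : ℕ) : ℤ) := by push_cast; ring
    rw [← h, Polynomial.Chebyshev.T_add_two]
    have hzz : z * z⁻¹ = 1 := mul_inv_cancel₀ hz
    simp only [Polynomial.eval_sub, Polynomial.eval_mul, Polynomial.eval_ofNat,
      Polynomial.eval_X]
    rw [show ((n:ℤ)+1) = ((n+1:ℕ):ℤ) by push_cast; ring]
    rw [ih2, ih1]
    linear_combination ((z ^ n + z⁻¹ ^ n) / 2) * hzz

lemma rp_ne_zero {q : ℝ} (hq0 : 0 < q) (r : ℝ) : rp q r ≠ 0 := by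
  simp [rp, Complex.ofReal_ne_zero, (Real.rpow_pos_of_pos hq0 r).ne']

lemma rp_mul_rp {q : ℝ} (hq0 : 0 < q) (a b : ℝ) : rp q a * rp q b = rp q (a + b) := by
  simp only [rp, ← Complex.ofReal_mul, ← Real.rpow_add hq0]

lemma rp_zero (q : ℝ) : rp q 0 = 1 := by simp [rp]

lemma rp_pow {q : ℝ} (hq0 : 0 < q) (r : ℝ) (n : ℕ) : (rp q r) ^ n = rp q (r * n) := by
  simp only [rp, ← Complex.ofReal_pow]
  norm_cast
  rw [Real.rpow_mul hq0.le, Real.rpow_natCast]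

lemma rp_half_inv {q : ℝ} (hq0 : 0 < q) : (rp q (1/2))⁻¹ = rp q (-(1/2)) := by
  have h : rp q (1/2) * rp q (-(1/2)) = 1 := by rw [rp_mul_rp hq0]; norm_num [rp_zero]
  exact inv_eq_of_mul_eq_one_right h

lemma rp_mhalf_inv {q : ℝ} (hq0 : 0 < q) : (rp q (-(1/2)))⁻¹ = rp q (1/2) := by
  have h : rp q (-(1/2)) * rp q (1/2) = 1 := by rw [rp_mul_rp hq0]; norm_num [rp_zero]
  exact inv_eq_of_mul_eq_one_right h

lemma alphaN_zero (q : ℝ) : alphaN q 0 = 1 := by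
  simp [alphaN, rp_zero]

lemma T_coeffs (n : ℕ) :
    (Polynomial.Chebyshev.T ℂ (n : ℤ)).natDegree ≤ n ∧
    (Polynomial.Chebyshev.T ℂ (n : ℤ)).coeff n = (if n = 0 then 1 else 2 ^ (n - 1)) ∧
    (1 ≤ n → (Polynomial.Chebyshev.T ℂ (n : ℤ)).coeff (n - 1) = 0) := by
  induction n using Nat.twoStepInduction with
  | zero => simp [Polynomial.Chebyshev.T_zero]
  | one => simp [Polynomial.Chebyshev.T_one]
  | more n ih1 ih2 =>
    obtain ⟨hd1, hc1, hp1⟩ := ih1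
    obtain ⟨hd2, hc2, hp2⟩ := ih2
    have h : ((n : ℤ) + 2) = ((n + 2 : ℕ) : ℤ) := by push_cast; ring
    have hrec : Polynomial.Chebyshev.T ℂ ((n + 2 : ℕ) : ℤ) =
        2 * X * Polynomial.Chebyshev.T ℂ ((n + 1 : ℕ) : ℤ) - Polynomial.Chebyshev.T ℂ (n : ℤ) := by
      rw [← h, Polynomial.Chebyshev.T_add_two]
      norm_cast
    have h2X : (2 * X : ℂ[X]) = Polynomial.C 2 * X := by norm_cast
    have hmul : ∀ k : ℕ, (2 * X * Polynomial.Chebyshev.T ℂ ((n + 1 : ℕ) : ℤ)).coeff (k + 1)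
        = 2 * (Polynomial.Chebyshev.T ℂ ((n + 1 : ℕ) : ℤ)).coeff k := by
      intro k
      rw [h2X, mul_assoc, coeff_C_mul, coeff_X_mul]
    have hdmul : (2 * X * Polynomial.Chebyshev.T ℂ ((n + 1 : ℕ) : ℤ)).natDegree ≤ n + 2 := by
      refine natDegree_mul_le.trans ?_
      have e1 : (2 * X : ℂ[X]).natDegree ≤ 1 := by
        rw [h2X]; exact (natDegree_C_mul_le _ _).trans natDegree_X_le
      omega
    refine ⟨?_, ?_, ?_⟩
    · rw [hrec]
      exact (natDegree_sub_le _ _).trans (max_le hdmul (hd1.trans (by omega)))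
    · rw [hrec, coeff_sub, show n + 2 = (n + 1) + 1 from rfl, hmul (n+1), hc2,
        if_neg (Nat.succ_ne_zero n)]
      rw [coeff_eq_zero_of_natDegree_lt (hd1.trans_lt (by omega))]
      simp [pow_succ]
      ring
    · intro _
      rw [hrec, coeff_sub, show n + 2 - 1 = n + 1 from rfl, hmul n]
      have e0 : (Polynomial.Chebyshev.T ℂ ((n + 1 : ℕ) : ℤ)).coeff n = 0 := by
        simpa using hp2 (by omega)
      rw [e0, coeff_eq_zero_of_natDegree_lt (hd1.trans_lt (by omega))]
      ring

lemma chebM_natDegree_le (n : ℕ) : (chebM n).natDegree ≤ n := by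
  unfold chebM
  split
  · simp
  · exact (natDegree_smul_le _ _).trans (T_coeffs n).1

lemma chebM_coeff_self (n : ℕ) : (chebM n).coeff n = 1 := by
  unfold chebM
  split
  · next h => subst h; simp
  · next h =>
    rw [coeff_smul, (T_coeffs n).2.1, if_neg h, smul_eq_mul]
    rw [show ((2:ℂ) ^ (n - 1) : ℂ) = (2:ℂ) ^ (((n-1:ℕ)):ℤ) from (zpow_natCast 2 (n-1)).symm,
      ← zpow_add₀ (two_ne_zero)]
    rw [show (1 - (n:ℤ) + ((n-1:ℕ):ℤ)) = 0 by omega]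
    exact zpow_zero 2

lemma chebM_coeff_pred (n : ℕ) (h : 1 ≤ n) : (chebM n).coeff (n - 1) = 0 := by
  unfold chebM
  rw [if_neg (by omega), coeff_smul, (T_coeffs n).2.2 h, smul_zero]

lemma chebM_eval_lattice (n : ℕ) (h : n ≠ 0) (z : ℂ) (hz : z ≠ 0) :
    Polynomial.eval (xl z) (chebM n) = (2:ℂ) ^ (1 - (n:ℤ)) * ((z ^ n + z⁻¹ ^ n) / 2) := by
  unfold chebM xl
  rw [if_neg h, eval_smul, T_eval_lattice z hz n, smul_eq_mul]

lemma isSq_chebM {q : ℝ} (hq0 : 0 < q) (n : ℕ) :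
    IsSq q (chebM n) (alphaN q n • chebM n) := by
  intro z hz
  rcases eq_or_ne n 0 with rfl | hn
  · norm_num [chebM, alphaN_zero]
  · have hc1 : rp q (1/2) ≠ 0 := rp_ne_zero hq0 _
    have hc2 : rp q (-(1/2)) ≠ 0 := rp_ne_zero hq0 _
    have e1 : xp q z = xl (rp q (1/2) * z) := by
      unfold xp xl; rw [mul_inv, rp_half_inv hq0]
    have e2 : xm q z = xl (rp q (-(1/2)) * z) := by
      unfold xm xl; rw [mul_inv, rp_mhalf_inv hq0]
    rw [eval_smul, chebM_eval_lattice n hn z hz, e1, e2,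
      chebM_eval_lattice n hn _ (mul_ne_zero hc1 hz),
      chebM_eval_lattice n hn _ (mul_ne_zero hc2 hz),
      mul_inv, mul_inv, rp_half_inv hq0, rp_mhalf_inv hq0,
      mul_pow, mul_pow, mul_pow, mul_pow, rp_pow hq0, rp_pow hq0,
      show (1/2 : ℝ) * n = (n:ℝ)/2 by ring,
      show (-(1/2) : ℝ) * n = -((n:ℝ)/2) by ring,
      smul_eq_mul, alphaN]
    ring

lemma IsSq.sub {q : ℝ} {f₁ g₁ f₂ g₂ : ℂ[X]} (h1 : IsSq q f₁ g₁) (h2 : IsSq q f₂ g₂) :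
    IsSq q (f₁ - f₂) (g₁ - g₂) := by
  intro z hz
  simp only [eval_sub, h1 z hz, h2 z hz]
  ring

lemma IsSq.smulC {q : ℝ} {f g : ℂ[X]} (a : ℂ) (h : IsSq q f g) : IsSq q (a • f) (a • g) := by
  intro z hz
  simp only [eval_smul, h z hz, smul_eq_mul]
  ring
lemma xl_surj (x : ℂ) : ∃ z : ℂ, z ≠ 0 ∧ xl z = x := by
  obtain ⟨z, hz⟩ := Complex.exists_root (f := X ^ 2 - Polynomial.C (2 * x) * X + 1)
    (by
      have : (X ^ 2 - Polynomial.C (2 * x) * X + 1 : ℂ[X]).degree = 2 := by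
        compute_degree!
      rw [this]; norm_num)
  have hz' : z ^ 2 - 2 * x * z + 1 = 0 := by
    simpa [Polynomial.IsRoot] using hz
  have hz0 : z ≠ 0 := by
    rintro rfl; simp at hz'
  refine ⟨z, hz0, ?_⟩
  have : z⁻¹ = 2 * x - z := by
    field_simp
    linear_combination hz'
  rw [xl, this]; ring

lemma sq_coeffs {q : ℝ} (hq0 : 0 < q) :
    ∀ n : ℕ, ∀ f g : ℂ[X], f.natDegree ≤ n → IsSq q f g →
      g.natDegree ≤ n ∧ g.coeff n = alphaN q n * f.coeff n ∧
      (1 ≤ n → g.coeff (n - 1) = alphaN q (n - 1) * f.coeff (n - 1)) := by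
  intro n
  induction n with
  | zero =>
    intro f g hf hsq
    obtain ⟨a, hfC⟩ : ∃ a, f = Polynomial.C a := ⟨f.coeff 0, Polynomial.eq_C_of_natDegree_le_zero hf⟩
    have hg : g = Polynomial.C a := by
      apply Polynomial.funext
      intro x
      obtain ⟨z, hz0, hzx⟩ := xl_surj x
      have h := hsq z hz0
      rw [hzx] at h
      rw [h, hfC]
      simp only [eval_C]
      ring
    refine ⟨?_, ?_, ?_⟩
    · rw [hg]; exact (natDegree_C _).le
    · rw [hg, hfC, alphaN_zero]; simp
    · omega
  | succ n ih =>
    intro f g hf hsq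
    set d := f.coeff (n + 1) with hd
    have hsq' : IsSq q (f - d • chebM (n + 1))
        (g - (d * alphaN q (n + 1)) • chebM (n + 1)) := by
      have h := hsq.sub ((isSq_chebM hq0 (n + 1)).smulC d)
      simpa [smul_smul, mul_comm] using h
    have hdegsub : (f - d • chebM (n + 1)).natDegree ≤ n + 1 :=
      (natDegree_sub_le _ _).trans (max_le hf
        ((natDegree_smul_le _ _).trans (chebM_natDegree_le _)))
    have hf' : (f - d • chebM (n + 1)).natDegree ≤ n := by
      refine natDegree_le_iff_coeff_eq_zero.mpr fun N hN => ?_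
      rcases eq_or_lt_of_le (Nat.succ_le_of_lt hN) with hNe | hNlt
      · rw [← hNe, coeff_sub, coeff_smul, chebM_coeff_self, smul_eq_mul, mul_one, ← hd,
          sub_self]
      · exact coeff_eq_zero_of_natDegree_lt (hdegsub.trans_lt hNlt)
    obtain ⟨hg1, hg2, hg3⟩ := ih _ _ hf' hsq'
    have hgdeg : g.natDegree ≤ n + 1 := by
      have hgeq : g = (g - (d * alphaN q (n + 1)) • chebM (n + 1))
          + (d * alphaN q (n + 1)) • chebM (n + 1) := by ring
      rw [hgeq]
      exact (natDegree_add_le _ _).trans (max_le (hg1.trans (by omega))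
        ((natDegree_smul_le _ _).trans (chebM_natDegree_le _)))
    refine ⟨hgdeg, ?_, ?_⟩
    · have h1 : (g - (d * alphaN q (n + 1)) • chebM (n + 1)).coeff (n + 1) = 0 :=
        coeff_eq_zero_of_natDegree_lt (hg1.trans_lt (by omega))
      rw [coeff_sub, coeff_smul, chebM_coeff_self, smul_eq_mul, mul_one] at h1
      rw [sub_eq_zero] at h1
      rw [h1]; ring
    · intro _
      have h2 : (g - (d * alphaN q (n + 1)) • chebM (n + 1)).coeff n =
          alphaN q n * (f - d • chebM (n + 1)).coeff n := hg2
      rw [coeff_sub, coeff_smul, coeff_sub, coeff_smul] at h2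
      have hcp : (chebM (n + 1)).coeff n = 0 := by
        simpa using chebM_coeff_pred (n + 1) (by omega)
      rw [hcp, smul_zero, sub_zero, smul_zero, sub_zero] at h2
      simpa using h2


theorem stmt6 (q : ℝ) (hq0 : 0 < q) (hq1 : q < 1)
    (P : ℕ → Polynomial ℂ) (B C : ℕ → ℂ)
    (hmonic : ∀ n, (P n).Monic) (hdeg : ∀ n, (P n).natDegree = n)
    (hCne : ∀ n, 1 ≤ n → C n ≠ 0)
    (hrec0 : Polynomial.X * P 0 = P 1 + Polynomial.C (B 0) * P 0)
    (hrec : ∀ n : ℕ, Polynomial.X * P (n + 1) =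
      P (n + 2) + Polynomial.C (B (n + 1)) * P (n + 1) + Polynomial.C (C (n + 1)) * P n)
    (c : ℂ) (sa sb sc : ℕ → ℂ) (hc0 : sc 0 = 0)
    (SP : ℕ → Polynomial ℂ) (hSP : ∀ n, IsSq q (P n) (SP n))
    (hstruct : ∀ n : ℕ, (Polynomial.X - Polynomial.C c) * SP n =
      (Polynomial.C (sa n) * Polynomial.X + Polynomial.C (sb n)) * P n
        + Polynomial.C (sc n) * P (n - 1)) :
    ∀ n : ℕ, sa n = alphaN q n ∧
      sb n = -alphaN q n * c + (alphaN q n - alphaN q (n - 1)) * ∑ j ∈ Finset.range n, B j := by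
  have hPlead : ∀ n, (P n).coeff n = 1 := by
    intro n
    have h := (hmonic n).coeff_natDegree
    rwa [hdeg n] at h
  have hP0 : P 0 = 1 := by
    have h := Polynomial.eq_C_of_natDegree_le_zero (hdeg 0).le
    rw [h]
    have := hPlead 0
    rw [this] at h ⊢
    simp
  -- subleading coefficients of P
  have hPsub : ∀ n : ℕ, (P (n + 1)).coeff n = -∑ j ∈ Finset.range (n + 1), B j := by
    intro n
    induction n with
    | zero =>
      have h := congrArg (fun p : Polynomial ℂ => p.coeff 0) hrec0
      simp only [Polynomial.mul_coeff_zero, Polynomial.coeff_X_zero, zero_mul,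
        Polynomial.coeff_add, Polynomial.coeff_C_mul, hP0, Polynomial.coeff_one, if_true, Polynomial.coeff_C_zero] at h
      simp only [zero_add, Finset.sum_range_one]
      linear_combination -h
    | succ n ih =>
      have h := congrArg (fun p : Polynomial ℂ => p.coeff (n + 1)) (hrec n)
      simp only [Polynomial.coeff_add, Polynomial.coeff_C_mul, Polynomial.coeff_X_mul] at h
      rw [hPlead (n + 1), ih,
        Polynomial.coeff_eq_zero_of_natDegree_lt (lt_of_le_of_lt (hdeg n).le (by omega))] at h
      rw [eq_comm, neg_eq_iff_eq_neg, Finset.sum_range_succ]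
      linear_combination -h
  -- coefficients of SP n
  have hSPc : ∀ n : ℕ, (SP (n + 1)).natDegree ≤ n + 1 ∧
      (SP (n + 1)).coeff (n + 1) = alphaN q (n + 1) ∧
      (SP (n + 1)).coeff n = alphaN q n * (P (n + 1)).coeff n := by
    intro n
    obtain ⟨h1, h2, h3⟩ := sq_coeffs hq0 (n + 1) (P (n + 1)) (SP (n + 1)) (hdeg (n + 1)).le
      (hSP (n + 1))
    refine ⟨h1, ?_, ?_⟩
    · rw [h2, hPlead (n + 1), mul_one]
    · simpa using h3 (by omega)
  -- helper coefficient identities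
  have coeffL : ∀ (p : Polynomial ℂ) (k : ℕ), ((Polynomial.X - Polynomial.C c) * p).coeff (k + 1)
      = p.coeff k - c * p.coeff (k + 1) := by
    intro p k
    rw [sub_mul, Polynomial.coeff_sub, Polynomial.coeff_X_mul, Polynomial.coeff_C_mul]
  have coeffR : ∀ (a b : ℂ) (p : Polynomial ℂ) (k : ℕ),
      ((Polynomial.C a * Polynomial.X + Polynomial.C b) * p).coeff (k + 1)
      = a * p.coeff k + b * p.coeff (k + 1) := by
    intro a b p k
    rw [add_mul, Polynomial.coeff_add, mul_assoc, Polynomial.coeff_C_mul,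
      Polynomial.coeff_X_mul, Polynomial.coeff_C_mul]
  intro n
  match n with
  | 0 =>
    -- SP 0 = 1
    obtain ⟨h1, h2, _⟩ := sq_coeffs hq0 0 (P 0) (SP 0) (hdeg 0).le (hSP 0)
    have hSP0 : SP 0 = 1 := by
      have h := Polynomial.eq_C_of_natDegree_le_zero h1
      rw [h2, alphaN_zero, hP0] at h
      simpa using h
    have hst := hstruct 0
    rw [hSP0, hP0, hc0, mul_one, mul_one] at hst
    simp only [Polynomial.C_0, zero_mul, add_zero] at hst
    have e1 := congrArg (fun p : Polynomial ℂ => p.coeff 1) hst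
    have e0 := congrArg (fun p : Polynomial ℂ => p.coeff 0) hst
    simp only [Polynomial.coeff_sub, Polynomial.coeff_add, Polynomial.coeff_X_one,
      Polynomial.coeff_C_mul, Polynomial.coeff_X_zero, Polynomial.coeff_C] at e1 e0
    norm_num at e1 e0
    constructor
    · rw [alphaN_zero]; exact e1.symm
    · rw [alphaN_zero]
      simp only [Nat.zero_sub, alphaN_zero, Finset.range_zero, Finset.sum_empty]
      rw [← e0]; ring
  | (n + 1) =>
    obtain ⟨hg1, hg2, hg3⟩ := hSPc n
    have hst := hstruct (n + 1)
    have e2 := congrArg (fun p : Polynomial ℂ => p.coeff (n + 1 + 1)) hst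
    have e1 := congrArg (fun p : Polynomial ℂ => p.coeff (n + 1)) hst
    simp only [Polynomial.coeff_add] at e2 e1
    rw [coeffL] at e2
    rw [coeffR] at e2
    rw [Polynomial.coeff_C_mul] at e2
    rw [hg2] at e2
    rw [Polynomial.coeff_eq_zero_of_natDegree_lt
        (show (SP (n + 1)).natDegree < n + 1 + 1 from lt_of_le_of_lt hg1 (by omega))] at e2
    rw [hPlead (n + 1)] at e2
    rw [Polynomial.coeff_eq_zero_of_natDegree_lt
        (show (P (n + 1)).natDegree < n + 1 + 1 by rw [hdeg]; omega)] at e2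
    rw [Polynomial.coeff_eq_zero_of_natDegree_lt
        (show (P (n + 1 - 1)).natDegree < n + 1 + 1 by rw [hdeg]; omega)] at e2
    have hsa : sa (n + 1) = alphaN q (n + 1) := by
      rw [mul_zero, mul_one, mul_zero] at e2
      simpa using e2.symm
    refine ⟨hsa, ?_⟩
    rw [coeffL, coeffR, Polynomial.coeff_C_mul, hg3, hg2, hPsub n, hPlead (n + 1),
      Polynomial.coeff_eq_zero_of_natDegree_lt
        (show (P (n + 1 - 1)).natDegree < n + 1 by rw [hdeg]; omega),
      hsa] at e1
    simp only [Nat.add_sub_cancel]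
    linear_combination -e1
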